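/- Let G and H be similar finite relational structures, each p-rigid (no automorphism of order p), such that for every similar structure K, hom(K,G) ≡ hom(K,H) (mod p). Then G and H are isomorphic. -/

import Mathlib

open Function

section Aux

variable {σ : Type} {ar : σ → ℕ}

def IsHom {K G : Type} (relK : ∀ s : σ, (Fin (ar s) → K) → Prop)
    (relG : ∀ s : σ, (Fin (ar s) → G) → Prop) (f : K → G) : Prop :=
  ∀ s t, relK s t → relG s (f ∘ t)

def pushRel {K : Type} (relK : ∀ s : σ, (Fin (ar s) → K) → Prop) (θ : Setoid K) :
    ∀ s : σ, (Fin (ar s) → Quotient θ) → Prop :=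
  fun s t => ∃ t₀, relK s t₀ ∧ t = Quotient.mk θ ∘ t₀

instance finSetoid (K : Type) [Finite K] : Finite (Setoid K) :=
  Finite.of_injective (fun θ => θ.r) (by rintro ⟨a, _⟩ ⟨b, _⟩ h; simp only at h; subst h; rfl)

/-- functions with given kernel correspond to injective functions on the quotient -/
noncomputable def fiberEquiv {K G : Type} (relK : ∀ s : σ, (Fin (ar s) → K) → Prop)
    (relG : ∀ s : σ, (Fin (ar s) → G) → Prop) (θ : Setoid K) :
    {f : K → G // IsHom relK relG f ∧ Setoid.ker f = θ} ≃
      {g : Quotient θ → G // IsHom (pushRel relK θ) relG g ∧ Injective g} where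
  toFun f := ⟨Quotient.lift f.1 (fun a b h => by
    have h' : (Setoid.ker f.1).r a b := by rw [f.2.2]; exact h
    exact h'), by
    constructor
    · rintro s t ⟨t₀, ht₀, rfl⟩
      exact f.2.1 s t₀ ht₀
    · rintro ⟨a⟩ ⟨b⟩ h
      exact Quotient.sound (f.2.2 ▸ (h : f.1 a = f.1 b))⟩
  invFun g := ⟨g.1 ∘ Quotient.mk θ, by
    constructor
    · intro s t ht
      exact g.2.1 s (Quotient.mk θ ∘ t) ⟨t, ht, rfl⟩
    · ext a b
      exact ⟨fun h => Quotient.exact (g.2.2 h), fun h => congrArg g.1 (Quotient.sound h)⟩⟩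
  left_inv f := by ext x; rfl
  right_inv g := by
    ext x
    induction x using Quotient.ind
    rfl

lemma homCard_eq_sum {K G : Type} [Fintype K] [Fintype G]
    (relK : ∀ s : σ, (Fin (ar s) → K) → Prop)
    (relG : ∀ s : σ, (Fin (ar s) → G) → Prop) (inst : Fintype (Setoid K)) :
    Nat.card {f : K → G // IsHom relK relG f} =
      ∑ θ ∈ @Finset.univ (Setoid K) inst,
        Nat.card {f : K → G // IsHom relK relG f ∧ Setoid.ker f = θ} := by
  letI := inst
  have e : {f : K → G // IsHom relK relG f} ≃
      Σ θ : Setoid K, {f : K → G // IsHom relK relG f ∧ Setoid.ker f = θ} :=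
    ((Equiv.sigmaFiberEquiv (fun f : {f : K → G // IsHom relK relG f} => Setoid.ker f.1)).symm.trans
      (Equiv.sigmaCongrRight fun θ =>
        Equiv.subtypeSubtypeEquivSubtypeInter (fun f : K → G => IsHom relK relG f) (fun f => Setoid.ker f = θ)))
  rw [Nat.card_congr e]
  classical
  rw [Nat.card_eq_fintype_card, Fintype.card_sigma]
  exact Finset.sum_congr rfl fun θ _ => (Nat.card_eq_fintype_card).symm


lemma modEq_sum {ι : Type*} (p : ℕ) (s : Finset ι) (f g : ι → ℕ)
    (h : ∀ i ∈ s, f i ≡ g i [MOD p]) :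
    ∑ i ∈ s, f i ≡ ∑ i ∈ s, g i [MOD p] := by
  classical
  induction s using Finset.induction_on with
  | empty => simp [Nat.ModEq.refl]
  | insert _ _ hx ih =>
    rename_i a s'
    rw [Finset.sum_insert hx, Finset.sum_insert hx]
    exact (h a (Finset.mem_insert_self a s')).add (ih fun i hi => h i (Finset.mem_insert_of_mem hi))

/-- the main induction: injective hom counts agree mod p -/
lemma injCard_modEq {σ : Type} {ar : σ → ℕ} (p : ℕ) (G H : Type) [Fintype G] [Fintype H]
    (relG : ∀ s : σ, (Fin (ar s) → G) → Prop)
    (relH : ∀ s : σ, (Fin (ar s) → H) → Prop)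
    (hhom : ∀ (K : Type) (_ : Fintype K) (relK : ∀ s : σ, (Fin (ar s) → K) → Prop),
      Nat.card {f : K → G // ∀ s t, relK s t → relG s (f ∘ t)} ≡
        Nat.card {f : K → H // ∀ s t, relK s t → relH s (f ∘ t)} [MOD p]) :
    ∀ (n : ℕ) (K : Type) (instK : Fintype K) (relK : ∀ s : σ, (Fin (ar s) → K) → Prop),
      Fintype.card K = n →
      Nat.card {f : K → G // IsHom relK relG f ∧ Injective f} ≡
        Nat.card {f : K → H // IsHom relK relH f ∧ Injective f} [MOD p] := by
  intro n
  induction n using Nat.strong_induction_on with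
  | _ n IH =>
    intro K instK relK hcard
    classical
    letI instS : Fintype (Setoid K) := Fintype.ofFinite _
    have hmod : Nat.card {f : K → G // IsHom relK relG f} ≡
        Nat.card {f : K → H // IsHom relK relH f} [MOD p] := hhom K instK relK
    rw [homCard_eq_sum relK relG instS, homCard_eq_sum relK relH instS] at hmod
    set cG := fun θ : Setoid K =>
      Nat.card {f : K → G // IsHom relK relG f ∧ Setoid.ker f = θ} with hcG
    set cH := fun θ : Setoid K =>
      Nat.card {f : K → H // IsHom relK relH f ∧ Setoid.ker f = θ} with hcH
    have hbot : (⊥ : Setoid K) ∈ (Finset.univ : Finset (Setoid K)) := Finset.mem_univ _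
    rw [← Finset.add_sum_erase _ cG hbot, ← Finset.add_sum_erase _ cH hbot] at hmod
    -- termwise congruence on the erased sum
    have herase : ∑ θ ∈ Finset.univ.erase ⊥, cG θ ≡ ∑ θ ∈ Finset.univ.erase ⊥, cH θ [MOD p] := by
      refine modEq_sum p _ _ _ fun θ hθ => ?_
      have hθne : θ ≠ ⊥ := (Finset.mem_erase.mp hθ).1
      letI : Fintype (Quotient θ) := Fintype.ofFinite _
      have hlt : Fintype.card (Quotient θ) < n := by
        rw [← hcard]
        refine Fintype.card_lt_of_surjective_not_injective (Quotient.mk θ)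
          Quotient.mk_surjective fun hinj => hθne ?_
        refine Setoid.ext fun a b => ?_
        constructor
        · intro h
          exact hinj (Quotient.sound h)
        · rintro rfl
          exact θ.refl a
      have := IH _ hlt (Quotient θ) _ (pushRel relK θ) rfl
      calc cG θ = Nat.card {g : Quotient θ → G // IsHom (pushRel relK θ) relG g ∧ Injective g} :=
            Nat.card_congr (fiberEquiv relK relG θ)
        _ ≡ Nat.card {g : Quotient θ → H // IsHom (pushRel relK θ) relH g ∧ Injective g} [MOD p] :=
            this
        _ = cH θ := (Nat.card_congr (fiberEquiv relK relH θ)).symm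
    have hbotEq := herase.add_right_cancel hmod
    have eG : cG ⊥ = Nat.card {f : K → G // IsHom relK relG f ∧ Injective f} :=
      Nat.card_congr (Equiv.subtypeEquivRight fun f => by
        rw [Setoid.injective_iff_ker_bot])
    have eH : cH ⊥ = Nat.card {f : K → H // IsHom relK relH f ∧ Injective f} :=
      Nat.card_congr (Equiv.subtypeEquivRight fun f => by
        rw [Setoid.injective_iff_ker_bot])
    rw [eG, eH] at hbotEq
    exact hbotEq


lemma isHom_iterate {σ : Type} {ar : σ → ℕ} {G : Type}
    {relG : ∀ s : σ, (Fin (ar s) → G) → Prop} {f : G → G}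
    (hf : IsHom relG relG f) : ∀ m, IsHom relG relG f^[m] := by
  intro m
  induction m with
  | zero => intro s t h; simpa using h
  | succ m ih =>
    intro s t h
    have := hf s (f^[m] ∘ t) (ih s t h)
    rw [← Function.comp_assoc, ← Function.iterate_succ'] at this
    exact this

/-- an injective endo-homomorphism of a finite structure is a two-sided automorphism -/
lemma injective_hom_iff {σ : Type} {ar : σ → ℕ} {G : Type} [Fintype G]
    {relG : ∀ s : σ, (Fin (ar s) → G) → Prop} {f : G → G}
    (hf : IsHom relG relG f) (hinj : Injective f) :
    ∀ s t, relG s t ↔ relG s (f ∘ t) := by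
  have hb : Function.Bijective f := (Finite.injective_iff_bijective).mp hinj
  set e : Equiv.Perm G := Equiv.ofBijective f hb with he
  have hk : orderOf e ≠ 0 := (orderOf_pos e).ne'
  set k := orderOf e with hkdef
  have hek : ⇑(e ^ k) = f^[k] := by
    rw [Equiv.Perm.coe_pow]
    rfl
  have hid : f^[k] = id := by
    rw [← hek, pow_orderOf_eq_one e]
    rfl
  intro s t
  constructor
  · exact fun h => hf s t h
  · intro h
    have h2 := isHom_iterate hf (k - 1) s (f ∘ t) h
    rw [← Function.comp_assoc] at h2
    have : f^[k - 1] ∘ f = id := by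
      rw [← Function.iterate_succ, Nat.succ_eq_add_one, Nat.sub_add_cancel
        (Nat.one_le_iff_ne_zero.mpr hk), hid]
    rw [this, Function.id_comp] at h2
    exact h2

/-- the automorphism subgroup of a structure -/
def autSubgroup {σ : Type} {ar : σ → ℕ} {G : Type}
    (relG : ∀ s : σ, (Fin (ar s) → G) → Prop) : Subgroup (Equiv.Perm G) where
  carrier := {φ | ∀ s t, relG s t ↔ relG s (⇑φ ∘ t)}
  one_mem' := by intro s t; rfl
  mul_mem' := by
    intro φ ψ hφ hψ s t
    rw [hψ s t, hφ s (⇑ψ ∘ t)]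
    rfl
  inv_mem' := by
    intro φ hφ s t
    have h1 := hφ s (⇑φ⁻¹ ∘ t)
    have hc : ⇑φ ∘ (⇑φ⁻¹ ∘ t) = t := by funext x; simp
    rw [hc] at h1
    exact h1.symm

noncomputable def injEndoEquivAut {σ : Type} {ar : σ → ℕ} {G : Type} [Fintype G]
    (relG : ∀ s : σ, (Fin (ar s) → G) → Prop) :
    {f : G → G // IsHom relG relG f ∧ Injective f} ≃ (autSubgroup relG) where
  toFun f := ⟨Equiv.ofBijective f.1 ((Finite.injective_iff_bijective).mp f.2.2),
    fun s t => injective_hom_iff f.2.1 f.2.2 s t⟩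
  invFun φ := ⟨⇑φ.1, fun s t h => (φ.2 s t).mp h, φ.1.injective⟩
  left_inv f := Subtype.ext rfl
  right_inv φ := Subtype.ext (Equiv.ext fun x => rfl)

lemma not_dvd_card_injEndo {σ : Type} {ar : σ → ℕ} {p : ℕ} (hp : p.Prime) {G : Type} [Fintype G]
    (relG : ∀ s : σ, (Fin (ar s) → G) → Prop)
    (hGrig : ¬ ∃ φ : Equiv.Perm G, (∀ s t, relG s t ↔ relG s (⇑φ ∘ t)) ∧ orderOf φ = p) :
    ¬ p ∣ Nat.card {f : G → G // IsHom relG relG f ∧ Injective f} := by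
  intro hdvd
  rw [Nat.card_congr (injEndoEquivAut relG)] at hdvd
  letI : Fintype (autSubgroup relG) := Fintype.ofFinite _
  rw [Nat.card_eq_fintype_card] at hdvd
  haveI : Fact p.Prime := ⟨hp⟩
  obtain ⟨g, hg⟩ := exists_prime_orderOf_dvd_card p hdvd
  refine hGrig ⟨(g : Equiv.Perm G), g.2, ?_⟩
  rw [← hg]
  exact orderOf_injective (autSubgroup relG).subtype Subtype.coe_injective g

end Aux

/-- Lovász-type theorem mod p: two finite `p`-rigid similar
relational structures with the same homomorphism counts mod `p` from every similar
structure are isomorphic. -/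
theorem lovasz_mod_p
    (σ : Type) (ar : σ → ℕ) (p : ℕ) (hp : p.Prime)
    (G H : Type) [Fintype G] [Fintype H]
    (relG : ∀ s : σ, (Fin (ar s) → G) → Prop)
    (relH : ∀ s : σ, (Fin (ar s) → H) → Prop)
    (hGrig : ¬ ∃ φ : Equiv.Perm G, (∀ s t, relG s t ↔ relG s (⇑φ ∘ t)) ∧ orderOf φ = p)
    (hHrig : ¬ ∃ φ : Equiv.Perm H, (∀ s t, relH s t ↔ relH s (⇑φ ∘ t)) ∧ orderOf φ = p)
    (hhom : ∀ (K : Type) (_ : Fintype K) (relK : ∀ s : σ, (Fin (ar s) → K) → Prop),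
      Nat.card {f : K → G // ∀ s t, relK s t → relG s (f ∘ t)} ≡
        Nat.card {f : K → H // ∀ s t, relK s t → relH s (f ∘ t)} [MOD p]) :
    ∃ φ : G ≃ H, ∀ s t, relG s t ↔ relH s (⇑φ ∘ t) := by
  classical
  -- injective homs G → H exist
  have hGG : Nat.card {f : G → G // IsHom relG relG f ∧ Injective f} ≡
      Nat.card {f : G → H // IsHom relG relH f ∧ Injective f} [MOD p] :=
    injCard_modEq p G H relG relH hhom (Fintype.card G) G ‹_› relG rfl
  have hGH_ne : Nat.card {f : G → H // IsHom relG relH f ∧ Injective f} ≠ 0 := by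
    intro h0
    rw [h0] at hGG
    exact not_dvd_card_injEndo hp relG hGrig ((Nat.modEq_zero_iff_dvd).mp hGG)
  have hGH : Nonempty {f : G → H // IsHom relG relH f ∧ Injective f} :=
    (Nat.card_ne_zero.mp hGH_ne).1
  -- injective homs H → G exist
  have hHH : Nat.card {f : H → H // IsHom relH relH f ∧ Injective f} ≡
      Nat.card {f : H → G // IsHom relH relG f ∧ Injective f} [MOD p] :=
    injCard_modEq p H G relH relG (fun K i relK => (hhom K i relK).symm)
      (Fintype.card H) H ‹_› relH rfl
  have hHG_ne : Nat.card {f : H → G // IsHom relH relG f ∧ Injective f} ≠ 0 := by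
    intro h0
    rw [h0] at hHH
    exact not_dvd_card_injEndo hp relH hHrig ((Nat.modEq_zero_iff_dvd).mp hHH)
  have hHG : Nonempty {f : H → G // IsHom relH relG f ∧ Injective f} :=
    (Nat.card_ne_zero.mp hHG_ne).1
  obtain ⟨φ, hφ, hφinj⟩ := hGH
  obtain ⟨ψ, hψ, hψinj⟩ := hHG
  have hcard : Fintype.card G = Fintype.card H :=
    le_antisymm (Fintype.card_le_of_injective φ hφinj) (Fintype.card_le_of_injective ψ hψinj)
  have hφbij : Function.Bijective φ :=
    (Fintype.bijective_iff_injective_and_card φ).mpr ⟨hφinj, hcard⟩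
  -- ψ ∘ φ is an injective endo-hom, hence reflects relations
  have hcompHom : IsHom relG relG (ψ ∘ φ) := by
    intro s t h
    have := hψ s (φ ∘ t) (hφ s t h)
    rwa [← Function.comp_assoc] at this
  have hcompIff := injective_hom_iff hcompHom (hψinj.comp hφinj)
  refine ⟨Equiv.ofBijective φ hφbij, fun s t => ?_⟩
  constructor
  · exact fun h => hφ s t h
  · intro h
    have h2 : relG s (ψ ∘ (⇑(Equiv.ofBijective φ hφbij) ∘ t)) := hψ s _ h
    have h3 : ψ ∘ (⇑(Equiv.ofBijective φ hφbij) ∘ t) = (ψ ∘ φ) ∘ t := by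
      funext x; rfl
    rw [h3] at h2
    exact (hcompIff s t).mpr h2
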